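/- Let ρ be a symmetric probability measure on ℝ with variance σ² > 0 such that Λ(u,v) = ln ∫ e^{uz+vz²} dρ(z) is finite in a neighborhood of (0,0). Then the function (x,y) ↦ I(x,y) − x²/(2y) on Δ* = {(x,y) : x² ≤ y, (x,y) ≠ (0,0)} is nonnegative and attains the value 0 only at the point (0, σ²). -/

import Mathlib

open MeasureTheory ENNReal

/-- The log-Laplace transform of the law of `(Z, Z^2)` for `Z ~ ρ`, as a function into `ℝ≥0∞`
before taking logarithms. -/
noncomputable def lapCW (ρ : Measure ℝ) (u v : ℝ) : ℝ≥0∞ :=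
  ∫⁻ z, ENNReal.ofReal (Real.exp (u * z + v * z ^ 2)) ∂ρ

/-- The Cramér transform `I` of the law of `(Z, Z^2)` for `Z ~ ρ`, with values in `EReal`. -/
noncomputable def cramCW (ρ : Measure ℝ) (x y : ℝ) : EReal :=
  ⨆ p : ℝ × ℝ, (((x * p.1 + y * p.2 : ℝ) : EReal) - ENNReal.log (lapCW ρ p.1 p.2))

section Aux

open Filter Topology

lemma aux_sinh_lt {t : ℝ} (ht : 0 < t) : Real.sinh t < t * Real.cosh t := by
  have key : StrictMonoOn (fun s => s * Real.cosh s - Real.sinh s) (Set.Ici (0:ℝ)) := by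
    apply strictMonoOn_of_deriv_pos (convex_Ici 0)
    · fun_prop
    · intro s hs
      rw [interior_Ici] at hs
      have h1 : HasDerivAt (fun s => s * Real.cosh s - Real.sinh s)
          (1 * Real.cosh s + s * Real.sinh s - Real.cosh s) s :=
        ((hasDerivAt_id s).mul (Real.hasDerivAt_cosh s)).sub (Real.hasDerivAt_sinh s)
      rw [h1.deriv]
      have hs' : (0:ℝ) < s := hs
      nlinarith [mul_pos hs' (Real.sinh_pos_iff.2 hs')]
  have := key (Set.self_mem_Ici) (Set.mem_Ici.2 ht.le) ht
  simpa using this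

lemma aux_cosh_lt {t : ℝ} (ht : t ≠ 0) : Real.cosh t < Real.exp (t ^ 2 / 2) := by
  have main : ∀ s : ℝ, 0 < s → Real.cosh s < Real.exp (s ^ 2 / 2) := by
    intro s hs
    have key : StrictMonoOn (fun s => s ^ 2 / 2 - Real.log (Real.cosh s)) (Set.Ici (0:ℝ)) := by
      apply strictMonoOn_of_deriv_pos (convex_Ici 0)
      · exact (continuous_pow 2 |>.div_const 2).continuousOn.sub
          ((Real.continuous_cosh.log (fun x => (Real.cosh_pos x).ne')).continuousOn)
      · intro r hr
        rw [interior_Ici] at hr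
        have h1 : HasDerivAt (fun s : ℝ => s ^ 2 / 2 - Real.log (Real.cosh s))
            ((2 * r ^ 1) / 2 - Real.sinh r / Real.cosh r) r :=
          ((hasDerivAt_pow 2 r).div_const 2).sub
            ((Real.hasDerivAt_cosh r).log (Real.cosh_pos r).ne')
        rw [h1.deriv]
        have h2 := aux_sinh_lt hr
        have h3 := Real.cosh_pos r
        rw [sub_pos, div_lt_iff₀ h3]
        simpa [pow_one] using by nlinarith
    have := key Set.self_mem_Ici (Set.mem_Ici.2 hs.le) hs
    simp only [Real.cosh_zero, Real.log_one] at this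
    have hlog : Real.log (Real.cosh s) < s ^ 2 / 2 := by linarith [this]
    calc Real.cosh s = Real.exp (Real.log (Real.cosh s)) :=
          (Real.exp_log (Real.cosh_pos s)).symm
    _ < Real.exp (s ^ 2 / 2) := Real.exp_lt_exp.2 hlog
  rcases ht.lt_or_gt with h | h
  · have := main (-t) (by linarith)
    simpa [Real.cosh_neg] using this
  · exact main t h

lemma exists_good_v {G : ℝ → ℝ} {c ε : ℝ} (hε : 0 < ε) (hG0 : G 0 = 0)
    (hd : HasDerivAt G c 0) (hc : c ≠ 0) : ∃ v, |v| < ε ∧ 0 < G v := by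
  rw [hasDerivAt_iff_tendsto_slope] at hd
  have hslope : ∀ v : ℝ, slope G 0 v = G v / v := by
    intro v; rw [slope_def_field, hG0, sub_zero, sub_zero]
  rcases hc.lt_or_gt with h | h
  · have hmono : 𝓝[<] (0:ℝ) ≤ 𝓝[≠] (0:ℝ) :=
      nhdsWithin_mono 0 (fun x hx => ne_of_lt hx)
    have ev1 : ∀ᶠ v in 𝓝[<] (0:ℝ), slope G 0 v < c / 2 :=
      (hd.mono_left hmono).eventually_lt_const (by linarith)
    have ev2 : ∀ᶠ v in 𝓝[<] (0:ℝ), v ∈ Set.Ioo (-ε) ε :=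
      eventually_nhdsWithin_of_eventually_nhds (Ioo_mem_nhds (by linarith) hε)
    have ev3 : ∀ᶠ v in 𝓝[<] (0:ℝ), v < 0 := eventually_mem_nhdsWithin
    obtain ⟨v, h1, h2, h3⟩ := (ev1.and (ev2.and ev3)).exists
    refine ⟨v, abs_lt.2 ⟨h2.1, h2.2⟩, ?_⟩
    rw [hslope] at h1
    have : G v / v < 0 := by linarith
    rcases div_neg_iff.1 this with ⟨ha, _⟩ | ⟨_, hb⟩
    · exact ha
    · linarith
  · have hmono : 𝓝[>] (0:ℝ) ≤ 𝓝[≠] (0:ℝ) :=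
      nhdsWithin_mono 0 (fun x hx => ne_of_gt hx)
    have ev1 : ∀ᶠ v in 𝓝[>] (0:ℝ), c / 2 < slope G 0 v :=
      (hd.mono_left hmono).eventually_const_lt (by linarith)
    have ev2 : ∀ᶠ v in 𝓝[>] (0:ℝ), v ∈ Set.Ioo (-ε) ε :=
      eventually_nhdsWithin_of_eventually_nhds (Ioo_mem_nhds (by linarith) hε)
    have ev3 : ∀ᶠ v in 𝓝[>] (0:ℝ), 0 < v := eventually_mem_nhdsWithin
    obtain ⟨v, h1, h2, h3⟩ := (ev1.and (ev2.and ev3)).exists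
    refine ⟨v, abs_lt.2 ⟨h2.1, h2.2⟩, ?_⟩
    rw [hslope] at h1
    have : 0 < G v / v := by linarith
    rcases div_pos_iff.1 this with ⟨ha, _⟩ | ⟨_, hb⟩
    · exact ha
    · linarith

lemma integrable_of_lap_lt_top {ρ : Measure ℝ} {u v : ℝ} (h : lapCW ρ u v < ⊤) :
    Integrable (fun z => Real.exp (u * z + v * z ^ 2)) ρ := by
  refine ⟨(by fun_prop :
    Continuous fun z : ℝ => Real.exp (u * z + v * z ^ 2)).aestronglyMeasurable, ?_⟩
  rw [hasFiniteIntegral_iff_ofReal (Filter.Eventually.of_forall fun z => Real.exp_nonneg _)]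
  exact h

lemma lap_eq_ofReal {ρ : Measure ℝ} {u v : ℝ}
    (h : Integrable (fun z => Real.exp (u * z + v * z ^ 2)) ρ) :
    lapCW ρ u v = ENNReal.ofReal (∫ z, Real.exp (u * z + v * z ^ 2) ∂ρ) := by
  rw [lapCW, ← ofReal_integral_eq_lintegral_ofReal h
    (Filter.Eventually.of_forall fun z => Real.exp_nonneg _)]

lemma self_le_exp (x : ℝ) : x ≤ Real.exp x := by linarith [Real.add_one_le_exp x]

lemma sq_le_aux {ε : ℝ} (hε : 0 < ε) (z : ℝ) :
    z ^ 2 ≤ (8 / ε) * Real.exp (ε / 8 * z ^ 2) := by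
  have h1 := self_le_exp (ε / 8 * z ^ 2)
  have h2 : (0:ℝ) < 8 / ε := by positivity
  calc z ^ 2 = (8 / ε) * (ε / 8 * z ^ 2) := by
        field_simp
  _ ≤ (8 / ε) * Real.exp (ε / 8 * z ^ 2) := by nlinarith

lemma deriv_F (ρ : Measure ℝ) [IsProbabilityMeasure ρ] {ε : ℝ} (hε : 0 < ε)
    (hexp : ∀ c : ℝ, |c| < ε → Integrable (fun z => Real.exp (c * z ^ 2)) ρ)
    {σ2 : ℝ} (hvar : ∫ z, z ^ 2 ∂ρ = σ2) :
    HasDerivAt (fun v => ∫ z, Real.exp (v * z ^ 2) ∂ρ) σ2 0 := by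
  have hb : Integrable (fun z => (8 / ε) * Real.exp (3 * ε / 8 * z ^ 2)) ρ :=
    (hexp (3 * ε / 8) (by rw [abs_of_pos (by positivity)]; linarith)).const_mul _
  have key := hasDerivAt_integral_of_dominated_loc_of_deriv_le
    (F := fun v (z : ℝ) => Real.exp (v * z ^ 2))
    (F' := fun v (z : ℝ) => z ^ 2 * Real.exp (v * z ^ 2))
    (x₀ := (0:ℝ)) (s := Metric.ball 0 (ε / 4)) (bound := fun z => (8 / ε) * Real.exp (3 * ε / 8 * z ^ 2))
    (μ := ρ) (Metric.ball_mem_nhds _ (by positivity))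
    (Filter.Eventually.of_forall fun v =>
      (by fun_prop : Continuous fun z : ℝ => Real.exp (v * z ^ 2)).aestronglyMeasurable)
    (by simpa using (integrable_const (1:ℝ)))
    ((by fun_prop : Continuous fun z : ℝ => z ^ 2 * Real.exp ((0:ℝ) * z ^ 2)).aestronglyMeasurable)
    (Filter.Eventually.of_forall fun z => ?_) hb (Filter.Eventually.of_forall fun z => ?_)
  · have : (∫ z, z ^ 2 * Real.exp (0 * z ^ 2) ∂ρ) = σ2 := by
      simpa using hvar
    rw [this] at key
    exact key.2
  · -- bound
    intro v hv
    rw [Metric.mem_ball, Real.dist_eq, sub_zero] at hv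
    have hz2 := sq_le_aux hε z
    have hexp_pos := Real.exp_pos (v * z ^ 2)
    have hmono : Real.exp (ε / 8 * z ^ 2) * Real.exp (v * z ^ 2)
        ≤ Real.exp (3 * ε / 8 * z ^ 2) := by
      rw [← Real.exp_add]
      apply Real.exp_le_exp.2
      have hz : (0:ℝ) ≤ z ^ 2 := sq_nonneg z
      have : v ≤ ε / 4 := le_of_lt (abs_lt.1 hv).2
      nlinarith
    rw [Real.norm_eq_abs, abs_of_nonneg (by positivity)]
    calc z ^ 2 * Real.exp (v * z ^ 2)
        ≤ (8 / ε) * Real.exp (ε / 8 * z ^ 2) * Real.exp (v * z ^ 2) := by nlinarith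
      _ = (8 / ε) * (Real.exp (ε / 8 * z ^ 2) * Real.exp (v * z ^ 2)) := by ring
      _ ≤ (8 / ε) * Real.exp (3 * ε / 8 * z ^ 2) := by
          have h8 : (0:ℝ) ≤ 8 / ε := by positivity
          nlinarith
  · -- differentiability
    intro v hv
    have : HasDerivAt (fun v : ℝ => v * z ^ 2) (z ^ 2) v := by
      simpa using (hasDerivAt_id v).mul_const (z ^ 2)
    simpa [mul_comm] using this.exp

lemma ofReal_max (a : ℝ) : ENNReal.ofReal (max a 0) = ENNReal.ofReal a := by
  rcases le_total a 0 with h | h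
  · rw [max_eq_right h, ENNReal.ofReal_zero, ENNReal.ofReal_of_nonpos h]
  · rw [max_eq_left h]

lemma jensen_bound (ρ : Measure ℝ) [IsProbabilityMeasure ρ] {σ2 : ℝ}
    (hz1 : Integrable (fun z => z) ρ) (hz2 : Integrable (fun z => z ^ 2) ρ)
    (hmean : ∫ z, z ∂ρ = 0) (hvar : ∫ z, z ^ 2 ∂ρ = σ2) (u v : ℝ) :
    ((v * σ2 : ℝ) : EReal) ≤ ENNReal.log (lapCW ρ u v) := by
  set c : ℝ := v * σ2 with hc
  set g : ℝ → ℝ := fun z =>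
    Real.exp c * (1 - c) + (Real.exp c * u) * z + (Real.exp c * v) * z ^ 2 with hg
  have hg_int : Integrable g ρ := by
    apply Integrable.add
    apply Integrable.add (integrable_const _) (hz1.const_mul _)
    exact hz2.const_mul _
  have hg_integral : ∫ z, g z ∂ρ = Real.exp c := by
    rw [hg]
    rw [integral_add (by apply Integrable.add (integrable_const _) (hz1.const_mul _))
      (hz2.const_mul _), integral_add (integrable_const _) (hz1.const_mul _),
      integral_const, integral_const_mul, integral_const_mul, hmean, hvar]
    simp [hc]; ring
  have hpt : ∀ z : ℝ, g z ≤ Real.exp (u * z + v * z ^ 2) := by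
    intro z
    have h1 : (u * z + v * z ^ 2 - c) + 1 ≤ Real.exp (u * z + v * z ^ 2 - c) :=
      Real.add_one_le_exp _
    have h2 : Real.exp (u * z + v * z ^ 2) =
        Real.exp c * Real.exp (u * z + v * z ^ 2 - c) := by
      rw [← Real.exp_add]; ring_nf
    have h3 := Real.exp_pos c
    simp only [hg, h2]; nlinarith [mul_le_mul_of_nonneg_left h1 h3.le]
  have key : ENNReal.ofReal (Real.exp c) ≤ lapCW ρ u v := by
    have h1 : ENNReal.ofReal (Real.exp c) ≤ ENNReal.ofReal (∫ z, max (g z) 0 ∂ρ) := by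
      apply ENNReal.ofReal_le_ofReal
      rw [← hg_integral]
      exact integral_mono hg_int hg_int.pos_part (fun z => le_max_left _ _)
    have h2 : ENNReal.ofReal (∫ z, max (g z) 0 ∂ρ) = ∫⁻ z, ENNReal.ofReal (max (g z) 0) ∂ρ :=
      ofReal_integral_eq_lintegral_ofReal hg_int.pos_part
        (Filter.Eventually.of_forall fun z => le_max_right _ _)
    have h3 : (∫⁻ z, ENNReal.ofReal (max (g z) 0) ∂ρ) ≤ lapCW ρ u v := by
      apply lintegral_mono
      intro z
      show ENNReal.ofReal (max (g z) 0) ≤ ENNReal.ofReal (Real.exp (u * z + v * z ^ 2))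
      rw [_root_.ofReal_max]
      exact ENNReal.ofReal_le_ofReal (hpt z)
    exact h1.trans (h2 ▸ h3)
  calc ((c : ℝ) : EReal) = ENNReal.log (ENNReal.ofReal (Real.exp c)) := by
        rw [ENNReal.log_ofReal_of_pos (Real.exp_pos c), Real.log_exp]
    _ ≤ ENNReal.log (lapCW ρ u v) := ENNReal.log_le_log_iff.2 key

lemma lap_zero_zero (ρ : Measure ℝ) [IsProbabilityMeasure ρ] : lapCW ρ 0 0 = 1 := by
  rw [lapCW]
  simp [measure_univ]

lemma map_int (ρ : Measure ℝ) (hsym : ρ.map (fun z => -z) = ρ) (f : ℝ → ℝ)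
    (hf : AEStronglyMeasurable f ρ) : ∫ z, f z ∂ρ = ∫ z, f (-z) ∂ρ := by
  conv_lhs => rw [← hsym]
  rw [integral_map (measurable_neg).aemeasurable (by rw [hsym]; exact hf)]

lemma mean_zero (ρ : Measure ℝ) (hsym : ρ.map (fun z => -z) = ρ)
    (hz1 : Integrable (fun z => z) ρ) : ∫ z, z ∂ρ = 0 := by
  have h := map_int ρ hsym (fun z => z) hz1.aestronglyMeasurable
  rw [integral_neg] at h
  linarith

lemma neg_measure_pos (ρ : Measure ℝ) [IsProbabilityMeasure ρ] {σ2 : ℝ} (hσ2 : 0 < σ2)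
    (hvar : ∫ z, z ^ 2 ∂ρ = σ2) :
    0 < ρ {z : ℝ | z ≠ 0} := by
  by_contra h
  push_neg at h
  have h0 : ρ {z : ℝ | z ≠ 0} = 0 := le_antisymm h (zero_le)
  have hae : ∀ᵐ z ∂ρ, (z : ℝ) = 0 := by
    rw [ae_iff]; simpa using h0
  have : ∫ z, z ^ 2 ∂ρ = ∫ z, (0:ℝ) ∂ρ := by
    apply integral_congr_ae
    filter_upwards [hae] with z hz
    simp [hz]
  rw [hvar, integral_zero] at this
  linarith

lemma symm_integral_lt_one (ρ : Measure ℝ) [IsProbabilityMeasure ρ]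
    (hsym : ρ.map (fun z => -z) = ρ) {σ2 : ℝ} (hσ2 : 0 < σ2)
    (hvar : ∫ z, z ^ 2 ∂ρ = σ2) {u : ℝ} (hu : u ≠ 0) :
    Integrable (fun z => Real.exp (u * z + -(u ^ 2) / 2 * z ^ 2)) ρ ∧
      0 < ∫ z, Real.exp (u * z + -(u ^ 2) / 2 * z ^ 2) ∂ρ ∧
      ∫ z, Real.exp (u * z + -(u ^ 2) / 2 * z ^ 2) ∂ρ < 1 := by
  have hbd : ∀ s z : ℝ, s * z + -(s ^ 2) / 2 * z ^ 2 ≤ 1 / 2 := by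
    intro s z; nlinarith [sq_nonneg (s * z - 1)]
  have hint : ∀ s : ℝ, Integrable (fun z => Real.exp (s * z + -(s ^ 2) / 2 * z ^ 2)) ρ := by
    intro s
    apply Integrable.mono' (integrable_const (Real.exp (1 / 2)))
      (by fun_prop : Continuous fun z : ℝ =>
        Real.exp (s * z + -(s ^ 2) / 2 * z ^ 2)).aestronglyMeasurable
    filter_upwards with z
    rw [Real.norm_eq_abs, abs_of_pos (Real.exp_pos _)]
    exact Real.exp_le_exp.2 (hbd s z)
  refine ⟨hint u, ?_, ?_⟩
  · rw [(integral_pos_iff_support_of_nonneg (fun z => (Real.exp_pos _).le) (hint u) :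
      _ ↔ 0 < ρ (Function.support _))]
    have : Function.support (fun z : ℝ => Real.exp (u * z + -(u ^ 2) / 2 * z ^ 2)) = Set.univ := by
      ext z; simp [(Real.exp_pos _).ne']
    rw [this, measure_univ]; norm_num
  · -- symmetrize
    have hrefl : ∫ z, Real.exp (u * z + -(u ^ 2) / 2 * z ^ 2) ∂ρ
        = ∫ z, Real.exp (-u * z + -(u ^ 2) / 2 * z ^ 2) ∂ρ := by
      have := map_int ρ hsym (fun z => Real.exp (u * z + -(u ^ 2) / 2 * z ^ 2))
        (hint u).aestronglyMeasurable
      rw [this]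
      congr 1; funext z; ring_nf
    have hint_neg : Integrable (fun z => Real.exp (-u * z + -(u ^ 2) / 2 * z ^ 2)) ρ := by
      simpa [neg_sq] using hint (-u)
    set f : ℝ → ℝ := fun z => Real.cosh (u * z) * Real.exp (-(u ^ 2) / 2 * z ^ 2) with hf
    have hf_int : Integrable f ρ := by
      have h := ((hint u).add hint_neg).div_const 2
      apply h.congr
      filter_upwards with z
      simp only [hf, Pi.add_apply, Real.cosh_eq, Real.exp_add, neg_mul]
      ring
    have hr_eq : ∫ z, Real.exp (u * z + -(u ^ 2) / 2 * z ^ 2) ∂ρ = ∫ z, f z ∂ρ := by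
      have h2 : ∫ z, f z ∂ρ = (∫ z, Real.exp (u * z + -(u ^ 2) / 2 * z ^ 2) ∂ρ
          + ∫ z, Real.exp (-u * z + -(u ^ 2) / 2 * z ^ 2) ∂ρ) / 2 := by
        rw [← integral_add (hint u) hint_neg, ← integral_div]
        apply integral_congr_ae
        filter_upwards with z
        simp only [hf, Pi.add_apply, Real.cosh_eq, Real.exp_add, neg_mul]
        ring
      rw [h2, ← hrefl]; ring
    have hf_le : ∀ z : ℝ, f z ≤ 1 := by
      intro z
      simp only [hf]
      have h1 : Real.cosh (u * z) ≤ Real.exp ((u * z) ^ 2 / 2) := Real.cosh_le_exp_half_sq _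
      have h2 : Real.exp ((u * z) ^ 2 / 2) * Real.exp (-(u ^ 2) / 2 * z ^ 2) = 1 := by
        rw [← Real.exp_add]; ring_nf; exact Real.exp_zero
      nlinarith [Real.exp_pos (-(u ^ 2) / 2 * z ^ 2), Real.cosh_pos (x := u * z)]
    have hf_lt : ∀ z : ℝ, z ≠ 0 → f z < 1 := by
      intro z hz
      simp only [hf]
      have h1 : Real.cosh (u * z) < Real.exp ((u * z) ^ 2 / 2) :=
        aux_cosh_lt (mul_ne_zero hu hz)
      have h2 : Real.exp ((u * z) ^ 2 / 2) * Real.exp (-(u ^ 2) / 2 * z ^ 2) = 1 := by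
        rw [← Real.exp_add]; ring_nf; exact Real.exp_zero
      nlinarith [Real.exp_pos (-(u ^ 2) / 2 * z ^ 2)]
    have hone_int : Integrable (fun z => 1 - f z) ρ := by
      exact (integrable_const (1:ℝ)).sub hf_int
    have hpos : 0 < ∫ z, (1 - f z) ∂ρ := by
      rw [integral_pos_iff_support_of_nonneg (f := fun z => 1 - f z)
        (fun z => sub_nonneg.2 (hf_le z)) hone_int]
      apply lt_of_lt_of_le (neg_measure_pos ρ hσ2 hvar)
      apply measure_mono
      intro z hz
      simp only [Function.mem_support]
      have := hf_lt z hz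
      intro hcontra
      have : f z = 1 := by linarith [sub_eq_zero.1 hcontra]
      linarith [hf_lt z hz]
    rw [hr_eq]
    have : ∫ z, (1 - f z) ∂ρ = 1 - ∫ z, f z ∂ρ := by
      rw [integral_sub (integrable_const _) hf_int, integral_const]
      simp [measure_univ]
    linarith [this ▸ hpos]

lemma lower_bound_term (ρ : Measure ℝ) (x y u v r : ℝ) (hr : 0 < r)
    (hlapr : lapCW ρ u v = ENNReal.ofReal r) :
    ((x * u + y * v - Real.log r : ℝ) : EReal) ≤ cramCW ρ x y := by
  have h1 : ENNReal.log (lapCW ρ u v) = ((Real.log r : ℝ) : EReal) := by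
    rw [hlapr, ENNReal.log_ofReal_of_pos hr]
  have h2 : (((x * u + y * v : ℝ) : ℝ) : EReal) - ENNReal.log (lapCW ρ u v)
      = ((x * u + y * v - Real.log r : ℝ) : EReal) := by
    rw [h1, ← EReal.coe_sub]
  rw [← h2]
  exact le_iSup (fun p : ℝ × ℝ =>
    (((x * p.1 + y * p.2 : ℝ) : EReal) - ENNReal.log (lapCW ρ p.1 p.2))) ((u, v) : ℝ × ℝ)

lemma ereal_pos_of {A : EReal} {s T : ℝ} (hT : 0 < T) (h : ((s + T : ℝ) : EReal) ≤ A) :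
    0 < A - ((s : ℝ) : EReal) := by
  have h1 : ((s + T : ℝ) : EReal) - ((s : ℝ) : EReal) ≤ A - ((s : ℝ) : EReal) :=
    EReal.sub_le_sub h (le_refl _)
  have h2 : ((s + T : ℝ) : EReal) - ((s : ℝ) : EReal) = ((T : ℝ) : EReal) := by
    rw [← EReal.coe_sub]; norm_num
  rw [h2] at h1
  exact lt_of_lt_of_le (EReal.coe_pos.2 hT) h1

end Aux

theorem cramCW_sub_F_unique_min (ρ : Measure ℝ) [IsProbabilityMeasure ρ]
    (hsym : ρ.map (fun z => -z) = ρ) (σ2 : ℝ) (hσ2 : 0 < σ2)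
    (hvar : ∫ z, z ^ 2 ∂ρ = σ2)
    (hdom : ∃ ε > 0, ∀ u v : ℝ, |u| < ε → |v| < ε → lapCW ρ u v < ⊤) :
    ∀ x y : ℝ, x ^ 2 ≤ y → (x, y) ≠ (0, 0) →
      (0 ≤ cramCW ρ x y - ((x ^ 2 / (2 * y) : ℝ) : EReal) ∧
        (cramCW ρ x y - ((x ^ 2 / (2 * y) : ℝ) : EReal) = 0 ↔ (x, y) = (0, σ2))) := by
  obtain ⟨ε, hε, hlap⟩ := hdom
  have hexp : ∀ c : ℝ, |c| < ε → Integrable (fun z => Real.exp (c * z ^ 2)) ρ := by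
    intro c hc
    have := integrable_of_lap_lt_top (hlap 0 c (by simpa using hε) hc)
    simpa using this
  have hz2 : Integrable (fun z => z ^ 2) ρ := by
    apply Integrable.mono' ((hexp (ε / 8)
      (by rw [abs_of_pos (by positivity)]; linarith)).const_mul (8 / ε))
      (by fun_prop : Continuous fun z : ℝ => z ^ 2).aestronglyMeasurable
    filter_upwards with z
    rw [Real.norm_eq_abs, abs_of_nonneg (sq_nonneg z)]
    exact sq_le_aux hε z
  have hz1 : Integrable (fun z => z) ρ := by
    apply Integrable.mono' ((integrable_const (1:ℝ)).add hz2)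
      (by fun_prop : Continuous fun z : ℝ => z).aestronglyMeasurable
    filter_upwards with z
    rw [Real.norm_eq_abs]
    show |z| ≤ 1 + z ^ 2
    nlinarith [sq_abs z, sq_nonneg (|z| - 1)]
  have hmean : ∫ z, z ∂ρ = 0 := mean_zero ρ hsym hz1
  have hJ := jensen_bound ρ hz1 hz2 hmean hvar
  have cram0 : cramCW ρ 0 σ2 = 0 := by
    apply le_antisymm
    · apply iSup_le
      rintro ⟨u, v⟩
      have h1 : ((0 * u + σ2 * v : ℝ) : EReal) = ((v * σ2 : ℝ) : EReal) := by
        norm_num [mul_comm]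
      calc (((0:ℝ) * u + σ2 * v : ℝ) : EReal) - ENNReal.log (lapCW ρ u v)
          ≤ ((v * σ2 : ℝ) : EReal) - ((v * σ2 : ℝ) : EReal) :=
            EReal.sub_le_sub (le_of_eq h1) (hJ u v)
        _ = 0 := by rw [← EReal.coe_sub]; norm_num
    · have hle := le_iSup (fun p : ℝ × ℝ =>
        (((0:ℝ) * p.1 + σ2 * p.2 : ℝ) : EReal) - ENNReal.log (lapCW ρ p.1 p.2)) ((0,0) : ℝ × ℝ)
      calc (0 : EReal) = (((0:ℝ) * 0 + σ2 * 0 : ℝ) : EReal) - ENNReal.log (lapCW ρ 0 0) := by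
            rw [lap_zero_zero, ENNReal.log_one]; norm_num
        _ ≤ cramCW ρ 0 σ2 := hle
  intro x y hxy hne
  by_cases hcase : (x, y) = (0, σ2)
  · rw [Prod.mk.injEq] at hcase
    obtain ⟨hx0, hyσ⟩ := hcase
    subst hx0
    have hzero : ((0:ℝ) ^ 2 / (2 * y) : ℝ) = 0 := by norm_num
    rw [hzero, hyσ, cram0, EReal.coe_zero, sub_zero]
    exact ⟨le_refl _, by simp [hyσ]⟩
  · suffices h : 0 < cramCW ρ x y - ((x ^ 2 / (2 * y) : ℝ) : EReal) by
      exact ⟨h.le, ⟨fun h0 => absurd h0.symm (ne_of_lt h), fun hc => absurd hc hcase⟩⟩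
    by_cases hx : x = 0
    · subst hx
      have hy0 : y ≠ 0 := by
        intro h; apply hne; rw [h]
      have hyσ : y ≠ σ2 := by
        intro h; apply hcase; rw [h]
      have hzero : ((0:ℝ) ^ 2 / (2 * y) : ℝ) = 0 := by norm_num
      rw [hzero]
      set F : ℝ → ℝ := fun v => ∫ z, Real.exp (v * z ^ 2) ∂ρ with hFdef
      have hF : HasDerivAt F σ2 0 := deriv_F ρ hε hexp hvar
      have hF0 : F 0 = 1 := by
        simp only [hFdef, zero_mul, Real.exp_zero]
        simp [measure_univ]
      set G : ℝ → ℝ := fun v => y * v - Real.log (F v) with hGdef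
      have hG0 : G 0 = 0 := by simp [hGdef, hF0]
      have hGd : HasDerivAt G (y - σ2) 0 := by
        have h1 : HasDerivAt (fun v : ℝ => y * v) y 0 := by
          simpa using (hasDerivAt_id (0:ℝ)).const_mul y
        have h2 : HasDerivAt (fun v => Real.log (F v)) (σ2 / F 0) 0 :=
          hF.log (by rw [hF0]; exact one_ne_zero)
        rw [hF0, div_one] at h2
        exact h1.sub h2
      obtain ⟨v, hv, hGv⟩ := exists_good_v hε hG0 hGd (sub_ne_zero.2 hyσ)
      have hFv_int := hexp v hv
      have hFv_pos : 0 < F v := by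
        rw [hFdef]
        rw [(integral_pos_iff_support_of_nonneg (fun z => (Real.exp_pos _).le) hFv_int :
          _ ↔ 0 < ρ (Function.support _))]
        have : Function.support (fun z : ℝ => Real.exp (v * z ^ 2)) = Set.univ := by
          ext z; simp [(Real.exp_pos _).ne']
        rw [this, measure_univ]; norm_num
      have hlapv : lapCW ρ 0 v = ENNReal.ofReal (F v) := by
        have heq : (fun z : ℝ => Real.exp (0 * z + v * z ^ 2)) = fun z => Real.exp (v * z ^ 2) := by
          funext z; norm_num
        rw [lap_eq_ofReal (by rw [heq]; exact hFv_int), hFdef]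
        congr 1
        exact congrArg (fun f => ∫ z, f z ∂ρ) heq
      have hlb := lower_bound_term ρ 0 y 0 v (F v) hFv_pos hlapv
      apply ereal_pos_of (s := 0) (T := G v) hGv
      have : (0 + G v : ℝ) = 0 * 0 + y * v - Real.log (F v) := by
        simp [hGdef]
      rw [this]
      exact hlb
    · -- x ≠ 0
      have hy : 0 < y := lt_of_lt_of_le (by positivity) hxy
      set u : ℝ := x / y with hu_def
      have hu : u ≠ 0 := div_ne_zero hx hy.ne'
      obtain ⟨hint, hrpos, hrlt⟩ := symm_integral_lt_one ρ hsym hσ2 hvar hu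
      set r : ℝ := ∫ z, Real.exp (u * z + -(u ^ 2) / 2 * z ^ 2) ∂ρ with hr_def
      have hlapu : lapCW ρ u (-(u ^ 2) / 2) = ENNReal.ofReal r := lap_eq_ofReal hint
      have hlogr : Real.log r < 0 := Real.log_neg hrpos hrlt
      have hlb := lower_bound_term ρ x y u (-(u ^ 2) / 2) r hrpos hlapu
      apply ereal_pos_of (s := x ^ 2 / (2 * y)) (T := -Real.log r) (by linarith)
      have huv : x * u + y * (-(u ^ 2) / 2) = x ^ 2 / (2 * y) := by
        rw [hu_def]; field_simp; ring
      have hkey : (x ^ 2 / (2 * y) + -Real.log r : ℝ)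
          = x * u + y * (-(u ^ 2) / 2) - Real.log r := by
        rw [huv]; ring
      rw [hkey]
      exact hlb
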